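/- Let f : [0,1]^n → [0,1]^k be Borel, g : [0,1]^k → [0,1]^n be α-Hölder with constant L (in the sup norm), and suppose A = {x ∈ [0,1]^n : g(f(x)) = x}. Then the upper box-counting dimension of A is at most k/α. -/

import Mathlib

/-- The `ε`-covering number of `A`: the minimal cardinality of an open cover of `A`
by sets of diameter `< ε`. -/
noncomputable def coverNum {X : Type*} [PseudoMetricSpace X] (A : Set X) (ε : ℝ) : ℕ :=
  sInf {N : ℕ | ∃ U : Fin N → Set X,
    (∀ i, IsOpen (U i) ∧ Metric.diam (U i) < ε) ∧ A ⊆ ⋃ i, U i}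

/-- Upper box-counting (Minkowski) dimension. -/
noncomputable def upperBoxDim {X : Type*} [PseudoMetricSpace X] (A : Set X) : ℝ :=
  Filter.limsup (fun ε : ℝ => Real.log (coverNum A ε) / Real.log (1 / ε))
    (nhdsWithin (0 : ℝ) (Set.Ioi 0))

/-- The unit cube in dimension m. -/
def cube (m : ℕ) : Set (Fin m → ℝ) := {x | ∀ i, x i ∈ Set.Icc (0 : ℝ) 1}

open Filter Metric Set

lemma coverNum_le_card {X : Type*} [PseudoMetricSpace X] {A : Set X} {ε : ℝ}
    {ι : Type*} [Fintype ι] (U : ι → Set X)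
    (hU : ∀ i, IsOpen (U i) ∧ Metric.diam (U i) < ε) (hA : A ⊆ ⋃ i, U i) :
    coverNum A ε ≤ Fintype.card ι := by
  apply Nat.sInf_le
  refine ⟨fun i => U ((Fintype.equivFin ι).symm i), fun i => hU _, hA.trans ?_⟩
  rw [Function.Surjective.iUnion_comp (Fintype.equivFin ι).symm.surjective U]

lemma coverNum_fixed_le (n k : ℕ) (L α : ℝ) (hL : 0 < L) (hα : 0 < α)
    (f : (Fin n → ℝ) → (Fin k → ℝ))
    (hfmap : ∀ x ∈ cube n, f x ∈ cube k)
    (g : (Fin k → ℝ) → (Fin n → ℝ))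
    (hg : ∀ u ∈ cube k, ∀ v ∈ cube k, dist (g u) (g v) ≤ L * dist u v ^ α)
    {ε' r : ℝ} (hε' : 0 < ε') (hr : 0 < r) (hLr : L * r ^ α ≤ ε' / 4) :
    coverNum {x | x ∈ cube n ∧ g (f x) = x} ε' ≤ (⌊1/r⌋₊ + 1) ^ k := by
  set m := ⌊1/r⌋₊ + 1 with hm
  set B : (Fin k → Fin m) → Set (Fin k → ℝ) :=
    fun j => {u | ∀ i, ((j i : ℕ) : ℝ) * r ≤ u i ∧ u i < (((j i : ℕ) : ℝ) + 1) * r} with hB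
  set U : (Fin k → Fin m) → Set (Fin n → ℝ) :=
    fun j => Metric.thickening (ε'/4) (g '' (B j ∩ cube k)) with hUdef
  have hcard : Fintype.card (Fin k → Fin m) = m ^ k := by simp
  have h1 : ∀ j, IsOpen (U j) ∧ Metric.diam (U j) < ε' := by
    intro j
    refine ⟨Metric.isOpen_thickening, lt_of_le_of_lt (b := 3/4 * ε') ?_ (by linarith)⟩
    apply Metric.diam_le_of_forall_dist_le (by linarith)
    intro x hx y hy
    obtain ⟨x', hx', hdx⟩ := Metric.mem_thickening_iff.mp hx
    obtain ⟨y', hy', hdy⟩ := Metric.mem_thickening_iff.mp hy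
    obtain ⟨ux, hux, rfl⟩ := hx'
    obtain ⟨uy, huy, rfl⟩ := hy'
    have hdist : dist ux uy ≤ r := by
      rw [dist_pi_le_iff hr.le]
      intro i
      have h1 := hux.1 i
      have h2 := huy.1 i
      rw [Real.dist_eq, abs_sub_le_iff]
      constructor <;> nlinarith [h1.1, h1.2, h2.1, h2.2]
    have hgd : dist (g ux) (g uy) ≤ ε' / 4 := by
      calc dist (g ux) (g uy) ≤ L * dist ux uy ^ α := hg _ hux.2 _ huy.2
        _ ≤ L * r ^ α := by
            have := Real.rpow_le_rpow dist_nonneg hdist hα.le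
            nlinarith
        _ ≤ ε' / 4 := hLr
    have htri := dist_triangle4 x (g ux) (g uy) y
    have hcomm : dist (g uy) y = dist y (g uy) := dist_comm _ _
    linarith
  have h2 : {x | x ∈ cube n ∧ g (f x) = x} ⊆ ⋃ j, U j := by
    intro x hx
    obtain ⟨hxc, hgf⟩ := hx
    have hu : f x ∈ cube k := hfmap x hxc
    have hur : ∀ i, 0 ≤ f x i / r := fun i => div_nonneg (hu i).1 hr.le
    have hjlt : ∀ i, ⌊f x i / r⌋₊ < m := by
      intro i
      have : ⌊f x i / r⌋₊ ≤ ⌊1/r⌋₊ := by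
        apply Nat.floor_le_floor
        gcongr
        exact (hu i).2
      omega
    set j : Fin k → Fin m := fun i => ⟨⌊f x i / r⌋₊, hjlt i⟩ with hj
    refine Set.mem_iUnion.mpr ⟨j, ?_⟩
    apply Metric.self_subset_thickening (by linarith) _
    refine ⟨f x, ⟨?_, hu⟩, hgf⟩
    intro i
    constructor
    · rw [← le_div_iff₀ hr]
      exact Nat.floor_le (hur i)
    · rw [← div_lt_iff₀ hr]
      exact Nat.lt_floor_add_one _
  calc coverNum {x | x ∈ cube n ∧ g (f x) = x} ε'
      ≤ Fintype.card (Fin k → Fin m) := coverNum_le_card U h1 h2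
    _ = m ^ k := hcard

theorem upperBoxDim_fixed_set_le (n k : ℕ) (L α : ℝ) (hL : 0 < L)
    (hα : α ∈ Set.Ioc (0 : ℝ) 1)
    (f : (Fin n → ℝ) → (Fin k → ℝ)) (hf : Measurable f)
    (hfmap : ∀ x ∈ cube n, f x ∈ cube k)
    (g : (Fin k → ℝ) → (Fin n → ℝ)) (hgmap : ∀ u ∈ cube k, g u ∈ cube n)
    (hg : ∀ u ∈ cube k, ∀ v ∈ cube k, dist (g u) (g v) ≤ L * dist u v ^ α) :
    upperBoxDim {x | x ∈ cube n ∧ g (f x) = x} ≤ (k : ℝ) / α := by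
  have hα0 : 0 < α := hα.1
  set A := {x | x ∈ cube n ∧ g (f x) = x} with hA
  set C : ℝ := Real.log 2 + α⁻¹ * Real.log (4*L) with hC
  set v : ℝ → ℝ := fun ε => (k * C) / (-Real.log ε) + k / α with hv
  have hneg : Tendsto (fun ε : ℝ => -Real.log ε) (nhdsWithin 0 (Set.Ioi 0)) atTop :=
    tendsto_neg_atBot_atTop.comp Real.tendsto_log_nhdsGT_zero
  have hvt : Tendsto v (nhdsWithin 0 (Set.Ioi 0)) (nhds ((k:ℝ)/α)) := by
    have h1 := (tendsto_const_nhds (x := (k * C : ℝ))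
      (f := nhdsWithin (0:ℝ) (Set.Ioi 0))).div_atTop hneg
    have h2 := h1.add_const ((k:ℝ)/α)
    simpa using h2
  have hev : ∀ᶠ ε in nhdsWithin (0:ℝ) (Set.Ioi 0),
      Real.log (coverNum A ε) / Real.log (1 / ε) ≤ v ε := by
    have hmem : Set.Ioo (0:ℝ) (min 1 (4*L)) ∈ nhdsWithin (0:ℝ) (Set.Ioi 0) :=
      Ioo_mem_nhdsGT_of_mem ⟨le_refl 0, lt_min one_pos (by linarith)⟩
    filter_upwards [hmem] with ε hε
    obtain ⟨hε0, hε1'⟩ := hε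
    have hε1 : ε < 1 := lt_of_lt_of_le hε1' (min_le_left _ _)
    have hε4 : ε < 4*L := lt_of_lt_of_le hε1' (min_le_right _ _)
    set r : ℝ := (ε/(4*L)) ^ (α⁻¹ : ℝ) with hrdef
    have hbase : 0 < ε/(4*L) := by positivity
    have hr : 0 < r := Real.rpow_pos_of_pos hbase _
    have hrα : r ^ α = ε/(4*L) := Real.rpow_inv_rpow hbase.le (ne_of_gt hα0)
    have hLr : L * r ^ α = ε/4 := by
      rw [hrα]; field_simp
    have hN := coverNum_fixed_le n k L α hL hα0 f hfmap g hg hε0 hr (le_of_eq hLr)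
    have hr1 : r ≤ 1 := Real.rpow_le_one hbase.le
      (by rw [div_le_one (by linarith)]; linarith) (by positivity)
    have hinv1 : 1 ≤ 1/r := one_le_one_div hr hr1
    have hT : 0 < -Real.log ε := by
      have := Real.log_neg hε0 hε1; linarith
    have hTne : -Real.log ε ≠ 0 := ne_of_gt hT
    have hαne : α ≠ 0 := ne_of_gt hα0
    have h12 : (1:ℝ) ≤ 2/r := by
      have : (2:ℝ)/r = 2 * (1/r) := by ring
      linarith
    have hstep1 : (coverNum A ε : ℝ) ≤ (2/r)^k := by
      calc (coverNum A ε : ℝ) ≤ (((⌊1/r⌋₊ + 1) ^ k : ℕ) : ℝ) := by exact_mod_cast hN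
        _ = ((⌊1/r⌋₊ : ℝ) + 1)^k := by push_cast; ring
        _ ≤ (2/r)^k := by
            apply pow_le_pow_left₀ (by positivity)
            have hfl : (⌊1/r⌋₊ : ℝ) ≤ 1/r := Nat.floor_le (by positivity)
            have : (2:ℝ)/r = 2 * (1/r) := by ring
            linarith
    have hbig : (1:ℝ) ≤ (2/r)^k := by
      calc (1:ℝ) = 1^k := (one_pow k).symm
        _ ≤ (2/r)^k := pow_le_pow_left₀ zero_le_one h12 k
    have hlogN : Real.log (coverNum A ε) ≤ Real.log ((2/r)^k) := by
      rcases Nat.eq_zero_or_pos (coverNum A ε) with h0 | hpos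
      · rw [h0]
        simpa using Real.log_nonneg hbig
      · exact Real.log_le_log (by exact_mod_cast hpos) hstep1
    have hkey : Real.log (2/r) = C + α⁻¹ * (-Real.log ε) := by
      rw [Real.log_div two_ne_zero (ne_of_gt hr), hrdef, Real.log_rpow hbase,
        Real.log_div (ne_of_gt hε0) (by positivity), hC]
      ring
    have hlog2 : Real.log ((2/r)^k) = (k:ℝ) * (C + α⁻¹ * (-Real.log ε)) := by
      rw [Real.log_pow, hkey]
    have hfinal : Real.log (coverNum A ε) ≤ (k:ℝ) * (C + α⁻¹ * (-Real.log ε)) :=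
      hlogN.trans (le_of_eq hlog2)
    have hloginv : Real.log (1/ε) = -Real.log ε := by rw [one_div, Real.log_inv]
    have heq : ((k:ℝ) * (C + α⁻¹ * (-Real.log ε))) / (-Real.log ε)
        = (k * C) / (-Real.log ε) + (k:ℝ)/α := by
      have hlne : Real.log ε ≠ 0 := fun h => hTne (by rw [h, neg_zero])
      field_simp
      ring
    calc Real.log (coverNum A ε) / Real.log (1/ε)
        = Real.log (coverNum A ε) / (-Real.log ε) := by rw [hloginv]
      _ ≤ ((k:ℝ) * (C + α⁻¹ * (-Real.log ε))) / (-Real.log ε) := by gcongr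
      _ = (k * C) / (-Real.log ε) + (k:ℝ)/α := heq
      _ = v ε := rfl
  have hcob : IsCoboundedUnder (· ≤ ·) (nhdsWithin (0:ℝ) (Set.Ioi 0))
      (fun ε : ℝ => Real.log (coverNum A ε) / Real.log (1 / ε)) := by
    apply isCoboundedUnder_le_of_eventually_le _ (x := 0)
    filter_upwards [Ioo_mem_nhdsGT_of_mem
      (show (0:ℝ) ∈ Set.Ico (0:ℝ) 1 from ⟨le_refl 0, one_pos⟩)] with ε hε
    apply div_nonneg (Real.log_natCast_nonneg _)
    rw [one_div, Real.log_inv]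
    have := Real.log_neg hε.1 hε.2
    linarith
  have hbdd : IsBoundedUnder (· ≤ ·) (nhdsWithin (0:ℝ) (Set.Ioi 0)) v :=
    hvt.isBoundedUnder_le
  show Filter.limsup (fun ε : ℝ => Real.log (coverNum A ε) / Real.log (1 / ε))
    (nhdsWithin (0:ℝ) (Set.Ioi 0)) ≤ (k:ℝ)/α
  exact le_trans (limsup_le_limsup hev hcob hbdd) (le_of_eq hvt.limsup_eq)
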